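/- Splitting factorization: Let K be a field of characteristic zero and D a derivation on the polynomial ring K[t] mapping K into K. Then every monic polynomial b ∈ K[t] admits a unique factorization b = b_s · b_n into monic polynomials b_s, b_n ∈ K[t] such that b_s divides D(b_s) (b_s is special) and every nonconstant irreducible factor q of b_n satisfies that q and Dq are coprime (all irreducible factors of b_n are normal). Moreover b_s and b_n are coprime. -/

import Mathlib

open Polynomial UniqueFactorizationMonoid

section Aux
set_option linter.unusedSectionVars false
set_option linter.unusedVariables false

variable {K : Type} [Field K] [CharZero K] {D : Polynomial K → Polynomial K}

lemma myD_one (hDmul : ∀ p q : Polynomial K, D (p * q) = p * D q + q * D p) :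
    D 1 = 0 := by
  have h := hDmul 1 1
  simp only [mul_one, one_mul] at h
  exact (left_eq_add.mp h)

lemma myD_pow (hDmul : ∀ p q : Polynomial K, D (p * q) = p * D q + q * D p)
    (q : Polynomial K) :
    ∀ n : ℕ, D (q ^ (n + 1)) = ((n : Polynomial K) + 1) * q ^ n * D q := by
  intro n
  induction n with
  | zero => simp [pow_one]
  | succ m ih =>
      rw [pow_succ', hDmul, ih]
      push_cast
      ring

lemma mySpecial_mul (hDmul : ∀ p q : Polynomial K, D (p * q) = p * D q + q * D p)
    {a b : Polynomial K} (ha : a ∣ D a) (hb : b ∣ D b) : a * b ∣ D (a * b) := by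
  rw [hDmul]
  exact dvd_add (mul_dvd_mul_left a hb)
    (by rw [mul_comm a b]; exact mul_dvd_mul_left b ha)

/-- every prime factor of a special polynomial is special -/
lemma mySpecial_prime (hDmul : ∀ p q : Polynomial K, D (p * q) = p * D q + q * D p)
    {bs q : Polynomial K} (hbs0 : bs ≠ 0) (hs : bs ∣ D bs) (hq : Prime q)
    (hdvd : q ∣ bs) : q ∣ D q := by
  have hfin : FiniteMultiplicity q bs := FiniteMultiplicity.of_prime_left hq hbs0
  obtain ⟨r, hr, hqr⟩ := hfin.exists_eq_pow_mul_and_not_dvd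
  set e := multiplicity q bs with he
  rcases Nat.eq_zero_or_pos e with h0 | hpos
  · rw [h0, pow_zero, one_mul] at hr
    exact absurd (hr ▸ hdvd) hqr
  obtain ⟨m, hm⟩ := Nat.exists_eq_succ_of_ne_zero hpos.ne'
  rw [hm] at hr
  have hD : D bs = q ^ (m + 1) * D r + r * (((m : Polynomial K) + 1) * q ^ m * D q) := by
    rw [hr, hDmul, myD_pow hDmul]
  have h1 : q ^ (m + 1) ∣ D bs := dvd_trans ⟨r, hr⟩ hs
  have h2 : q ^ (m + 1) ∣ r * (((m : Polynomial K) + 1) * q ^ m * D q) := by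
    have h := dvd_sub h1 (Dvd.intro _ rfl : q ^ (m + 1) ∣ q ^ (m + 1) * D r)
    rwa [hD, add_sub_cancel_left] at h
  have h2' : q ^ m * q ∣ q ^ m * (r * (((m : Polynomial K) + 1) * D q)) := by
    have heq : q ^ m * (r * (((m : Polynomial K) + 1) * D q)) =
        r * (((m : Polynomial K) + 1) * q ^ m * D q) := by ring
    rw [heq, ← pow_succ]; exact h2
  have h4 : q ∣ r * (((m : Polynomial K) + 1) * D q) :=
    (mul_dvd_mul_iff_left (pow_ne_zero m hq.ne_zero)).mp h2'
  rcases hq.dvd_or_dvd h4 with h | h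
  · exact absurd h hqr
  rcases hq.dvd_or_dvd h with h | h
  · exfalso
    have hC : ((m : Polynomial K) + 1) = C ((m : K) + 1) := by
      rw [map_add, map_one, Polynomial.C_eq_natCast]
    have hu : IsUnit ((m : Polynomial K) + 1) := by
      rw [hC]
      exact isUnit_C.mpr (isUnit_iff_ne_zero.mpr (Nat.cast_add_one_ne_zero m))
    exact hq.not_unit (isUnit_of_dvd_unit h hu)
  · exact h

/-- a special polynomial is coprime to any polynomial all of whose
irreducible factors are normal -/
lemma myCoprime (hDmul : ∀ p q : Polynomial K, D (p * q) = p * D q + q * D p)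
    {bs bn : Polynomial K} (hbs0 : bs ≠ 0) (hbn0 : bn ≠ 0) (hs : bs ∣ D bs)
    (hn : ∀ q : Polynomial K, Irreducible q → 0 < q.degree → q ∣ bn →
      IsCoprime q (D q)) : IsCoprime bs bn := by
  apply isCoprime_of_dvd _ _ (fun h => hbs0 h.1)
  intro z hz hz0 hzbs hzbn
  obtain ⟨q, hqirr, hqz⟩ := WfDvdMonoid.exists_irreducible_factor hz hz0
  have hqbs : q ∣ bs := hqz.trans hzbs
  have hqbn : q ∣ bn := hqz.trans hzbn
  have hqs : q ∣ D q := mySpecial_prime hDmul hbs0 hs hqirr.prime hqbs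
  have hqc : IsCoprime q (D q) := hn q hqirr (degree_pos_of_irreducible hqirr) hqbn
  exact hqirr.not_isUnit (hqc.isUnit_of_dvd' dvd_rfl hqs)

end Aux

theorem splitting_factorization
    {K : Type} [Field K] [CharZero K]
    (D : Polynomial K → Polynomial K)
    (hDadd : ∀ p q : Polynomial K, D (p + q) = D p + D q)
    (hDmul : ∀ p q : Polynomial K, D (p * q) = p * D q + q * D p)
    (hDK : ∀ c : K, ∃ c' : K, D (C c) = C c')
    (b : Polynomial K) (hb : b.Monic) :
    (∃! bsn : Polynomial K × Polynomial K,
      bsn.1.Monic ∧ bsn.2.Monic ∧ b = bsn.1 * bsn.2 ∧ bsn.1 ∣ D bsn.1 ∧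
      ∀ q : Polynomial K, Irreducible q → 0 < q.degree → q ∣ bsn.2 →
        IsCoprime q (D q)) ∧
    (∀ bs bn : Polynomial K, bs.Monic → bn.Monic → b = bs * bn → bs ∣ D bs →
      (∀ q : Polynomial K, Irreducible q → 0 < q.degree → q ∣ bn →
        IsCoprime q (D q)) →
      IsCoprime bs bn) := by
  classical
  have hb0 : b ≠ 0 := hb.ne_zero
  -- general uniqueness of the splitting
  have key : ∀ bs1 bn1 bs2 bn2 : Polynomial K, bs1.Monic → bn1.Monic →
      b = bs1 * bn1 → bs1 ∣ D bs1 →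
      (∀ q : Polynomial K, Irreducible q → 0 < q.degree → q ∣ bn1 → IsCoprime q (D q)) →
      bs2.Monic → bn2.Monic → b = bs2 * bn2 → bs2 ∣ D bs2 →
      (∀ q : Polynomial K, Irreducible q → 0 < q.degree → q ∣ bn2 → IsCoprime q (D q)) →
      bs1 = bs2 ∧ bn1 = bn2 := by
    intro bs1 bn1 bs2 bn2 hM1 hN1 hf1 hs1 hn1 hM2 hN2 hf2 hs2 hn2
    have d12 : bs1 ∣ bs2 := by
      have hcop : IsCoprime bs1 bn2 := myCoprime hDmul hM1.ne_zero hN2.ne_zero hs1 hn2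
      exact hcop.dvd_of_dvd_mul_right (hf2 ▸ (⟨bn1, hf1⟩ : bs1 ∣ b))
    have d21 : bs2 ∣ bs1 := by
      have hcop : IsCoprime bs2 bn1 := myCoprime hDmul hM2.ne_zero hN1.ne_zero hs2 hn1
      exact hcop.dvd_of_dvd_mul_right (hf1 ▸ (⟨bn2, hf2⟩ : bs2 ∣ b))
    have hbs : bs1 = bs2 :=
      Polynomial.eq_of_monic_of_associated hM1 hM2 (associated_of_dvd_dvd d12 d21)
    refine ⟨hbs, ?_⟩
    apply mul_left_cancel₀ hM1.ne_zero
    rw [← hf1, hbs, ← hf2]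
  constructor
  · -- existence and uniqueness
    set S := normalizedFactors b with hS
    set bs := (S.filter (fun q => q ∣ D q)).prod with hbsdef
    set bn := (S.filter (fun q => ¬ q ∣ D q)).prod with hbndef
    have hmemMonic : ∀ q ∈ S, q.Monic := by
      intro q hq
      have hne : q ≠ 0 := (prime_of_normalized_factor q hq).ne_zero
      have := normalize_normalized_factor q hq
      rw [← this]
      exact Polynomial.monic_normalize hne
    have hmonicProd : ∀ t : Multiset (Polynomial K), (∀ q ∈ t, q.Monic) → t.prod.Monic := by
      intro t h
      have := Polynomial.monic_multiset_prod_of_monic t id h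
      simpa using this
    have hbsM : bs.Monic :=
      hmonicProd _ (fun q hq => hmemMonic q (Multiset.mem_filter.mp hq).1)
    have hbnM : bn.Monic :=
      hmonicProd _ (fun q hq => hmemMonic q (Multiset.mem_filter.mp hq).1)
    have hprod : b = bs * bn := by
      rw [hbsdef, hbndef, ← Multiset.prod_add, Multiset.filter_add_not]
      exact (Polynomial.eq_of_monic_of_associated (hmonicProd S hmemMonic) hb
        (prod_normalizedFactors hb0)).symm
    have hbsS : bs ∣ D bs := by
      have hspecProd : ∀ t : Multiset (Polynomial K), (∀ q ∈ t, q ∣ D q) →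
          t.prod ∣ D t.prod := by
        intro t
        induction t using Multiset.induction with
        | empty =>
            intro _
            rw [Multiset.prod_zero, myD_one hDmul]
            exact dvd_zero 1
        | cons a s ih =>
            intro h
            rw [Multiset.prod_cons]
            exact mySpecial_mul hDmul (h a (Multiset.mem_cons_self a s))
              (ih fun q hq => h q (Multiset.mem_cons_of_mem hq))
      exact hspecProd _ (fun q hq => (Multiset.mem_filter.mp hq).2)
    have hnorm : ∀ q : Polynomial K, Irreducible q → 0 < q.degree → q ∣ bn →
        IsCoprime q (D q) := by
      intro q hqirr hqdeg hqdvd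
      have hq' : Prime q := hqirr.prime
      obtain ⟨r, hrmem, hqr⟩ := hq'.exists_mem_multiset_dvd hqdvd
      obtain ⟨hrS, hrn⟩ := Multiset.mem_filter.mp hrmem
      apply hqirr.coprime_iff_not_dvd.mpr
      intro hqs
      apply hrn
      have hr' : Prime r := prime_of_normalized_factor r hrS
      have hassoc : Associated q r := hq'.associated_of_dvd hr' hqr
      obtain ⟨u, hu⟩ := id hassoc
      obtain ⟨c, hcu, hcC⟩ := Polynomial.isUnit_iff.mp u.isUnit
      have hrc : r = C c * q := by rw [← hu, ← hcC]; ring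
      have hDr : D r = C c * D q + q * D (C c) := by rw [hrc, hDmul]
      rw [hDr]
      refine dvd_add ?_ (dvd_mul_of_dvd_left hassoc.dvd' _)
      rw [hrc]
      exact mul_dvd_mul_left _ hqs
    refine ⟨(bs, bn), ⟨hbsM, hbnM, hprod, hbsS, hnorm⟩, ?_⟩
    rintro ⟨bs', bn'⟩ ⟨h1, h2, h3, h4, h5⟩
    obtain ⟨e1, e2⟩ := key bs' bn' bs bn h1 h2 h3 h4 h5 hbsM hbnM hprod hbsS hnorm
    exact Prod.ext e1 e2
  · intro bs1 bn1 h1 h2 h3 h4 h5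
    exact myCoprime hDmul h1.ne_zero h2.ne_zero h4 h5
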